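/- The reverse function on counter profiles, rev(i⁺←, c_max, i⁺→) = (i⁺←, ⊥, ⊥) if i⁺→ = ⊥ and (i⁺→, c_max, i⁺←) otherwise, is an involution satisfying rev(a ∘ b) = rev(b) ∘ rev(a), and corresponds to reversing counter-operation sequences: Profile(w.reverse) = rev(Profile(w)) for every w ∈ {i,r,n}*. -/

import Mathlib

/-- Counter operations of B-automata / RPRS: increment, reset, no-op. -/
inductive Op : Type
  | inc | res | nop
deriving DecidableEq

/-- Counter profiles: triples `(i⁺←, c_max, i⁺→)` over `ℕ ∪ {⊥}`. -/
abbrev CP : Type := Option ℕ × Option ℕ × Option ℕ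

/-- Order on `ℕ ∪ {⊥}`: numbers canonically, `⊥` only comparable with itself. -/
def ole : Option ℕ → Option ℕ → Prop
  | some m, some n => m ≤ n
  | none, none => True
  | _, _ => False

/-- Component-wise order on counter profiles. -/
def le3 (p q : CP) : Prop := ole p.1 q.1 ∧ ole p.2.1 q.2.1 ∧ ole p.2.2 q.2.2

/-- Strict component-wise order on counter profiles. -/
def lt3 (p q : CP) : Prop := le3 p q ∧ ¬ le3 q p

/-- The list of numbers of increments in the blocks of a counter-operation
sequence delimited by resets (read left to right; always nonempty). -/
def blocks : List Op → List ℕ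
  | [] => [0]
  | Op.inc :: w =>
      match blocks w with
      | [] => [1]
      | b :: bs => (b + 1) :: bs
  | Op.nop :: w => blocks w
  | Op.res :: w => 0 :: blocks w

/-- The counter profile of a counter-operation sequence. -/
def Profile (w : List Op) : CP :=
  match blocks w with
  | [] => (some 0, none, none)
  | [b] => (some b, none, none)
  | b :: bs =>
      (some b,
       if 2 ≤ bs.length then some (bs.dropLast.foldr max 0) else none,
       some (bs.getLast!))

/-- A profile is valid if it arises from some counter-operation sequence. -/
def ValidCP (p : CP) : Prop := ∃ w : List Op, Profile w = p

/-- The neutral counter profile. -/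
def cpOne : CP := (some 0, none, none)

/-- Concatenation of counter profiles (induced by word concatenation). -/
def pcomp : CP → CP → CP
  | (a, _, none), (a', c', d') => (Option.map₂ (· + ·) a a', c', d')
  | (a, c, some d), (a', _, none) => (a, c, some (d + a'.getD 0))
  | (a, c, some d), (a', c', some d') =>
      (a, some (max (c.getD 0) (max (c'.getD 0) (d + a'.getD 0))), some d')

/-- The reverse function on counter profiles. -/
def prev : CP → CP
  | (a, _, none) => (a, none, none)
  | (a, c, some d) => (some d, c, a)

lemma getLast!_concat' (l : List ℕ) (x : ℕ) : (l ++ [x]).getLast! = x :=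
  List.getLast!_of_getLast? (by simp)

lemma foldr_max_shift (l : List ℕ) (x a : ℕ) :
    l.foldr max (max x a) = max x (l.foldr max a) := by
  induction l generalizing a with
  | nil => rfl
  | cons b l ih => simp only [List.foldr_cons, ih]; omega

lemma foldr_max_reverse (l : List ℕ) (a : ℕ) :
    l.reverse.foldr max a = l.foldr max a := by
  induction l generalizing a with
  | nil => rfl
  | cons b l ih =>
    simp only [List.reverse_cons, List.foldr_append, List.foldr_cons,
      List.foldr_nil, ih]
    rw [← foldr_max_shift]

/-- increment the head of a block list (empty list becoming `[1]`). -/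
def incHead : List ℕ → List ℕ
  | [] => [1]
  | b :: bs => (b + 1) :: bs

lemma blocks_cons_inc (w : List Op) :
    blocks (Op.inc :: w) = incHead (blocks w) := by
  show (match blocks w with | [] => [1] | b :: bs => (b + 1) :: bs) = _
  cases blocks w <;> rfl

lemma blocks_ne_nil (w : List Op) : blocks w ≠ [] := by
  induction w with
  | nil => simp [blocks]
  | cons a w ih =>
    cases a
    · rw [blocks_cons_inc]; cases blocks w <;> simp [incHead]
    · simp [blocks]
    · simpa [blocks] using ih

/-- increment the last entry of a list -/
def upLast : List ℕ → List ℕ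
  | [] => []
  | [b] => [b + 1]
  | b :: bs => b :: upLast bs

lemma upLast_cons (b : ℕ) (bs : List ℕ) (h : bs ≠ []) :
    upLast (b :: bs) = b :: upLast bs := by
  cases bs with
  | nil => exact absurd rfl h
  | cons c cs => rfl

lemma upLast_concat (l : List ℕ) (x : ℕ) : upLast (l ++ [x]) = l ++ [x + 1] := by
  induction l with
  | nil => rfl
  | cons b l ih => rw [List.cons_append, upLast_cons _ _ (by simp), ih]; rfl

lemma blocks_snoc_nop (w : List Op) : blocks (w ++ [Op.nop]) = blocks w := by
  induction w with
  | nil => rfl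
  | cons a w ih => cases a <;> simp [blocks, ih]

lemma incHead_append (l l' : List ℕ) (h : l ≠ []) :
    incHead (l ++ l') = incHead l ++ l' := by
  cases l with
  | nil => exact absurd rfl h
  | cons b bs => rfl

lemma blocks_snoc_res (w : List Op) :
    blocks (w ++ [Op.res]) = blocks w ++ [0] := by
  induction w with
  | nil => rfl
  | cons a w ih =>
    cases a
    · rw [List.cons_append, blocks_cons_inc, blocks_cons_inc, ih,
        incHead_append _ _ (blocks_ne_nil w)]
    · simp [blocks, ih]
    · simpa [blocks] using ih

lemma incHead_upLast : ∀ l : List ℕ, l ≠ [] → incHead (upLast l) = upLast (incHead l)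
  | [], h => absurd rfl h
  | [_], _ => rfl
  | b :: c :: cs, _ => by
      rw [upLast_cons b (c :: cs) (by simp)]
      show (b + 1) :: upLast (c :: cs) = upLast ((b + 1) :: c :: cs)
      rw [upLast_cons (b + 1) (c :: cs) (by simp)]

lemma blocks_snoc_inc (w : List Op) :
    blocks (w ++ [Op.inc]) = upLast (blocks w) := by
  induction w with
  | nil => rfl
  | cons a w ih =>
    cases a
    · -- inc
      rw [List.cons_append, blocks_cons_inc, blocks_cons_inc, ih,
        incHead_upLast _ (blocks_ne_nil w)]
    · -- res
      rw [List.cons_append]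
      show 0 :: blocks (w ++ [Op.inc]) = upLast (0 :: blocks w)
      rw [ih, upLast_cons 0 _ (blocks_ne_nil w)]
    · -- nop
      simpa [blocks] using ih

lemma blocks_reverse (w : List Op) :
    blocks w.reverse = (blocks w).reverse := by
  induction w with
  | nil => rfl
  | cons a w ih =>
    cases a
    · rw [List.reverse_cons, blocks_snoc_inc, ih, blocks_cons_inc]
      cases h : blocks w with
      | nil => exact absurd h (blocks_ne_nil w)
      | cons b bs =>
        simp only [incHead, List.reverse_cons, upLast_concat]
    · rw [List.reverse_cons, blocks_snoc_res, ih]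
      show _ = (blocks (Op.res :: w)).reverse
      simp [blocks]
    · rw [List.reverse_cons, blocks_snoc_nop, ih]
      show _ = (blocks (Op.nop :: w)).reverse
      simp [blocks]

/-- the profile determined by a block list -/
def profOf : List ℕ → CP
  | [] => (some 0, none, none)
  | [b] => (some b, none, none)
  | b :: bs =>
      (some b,
       if 2 ≤ bs.length then some (bs.dropLast.foldr max 0) else none,
       some (bs.getLast!))

lemma Profile_eq (w : List Op) : Profile w = profOf (blocks w) := rfl

lemma profOf_concat (b : ℕ) (ms : List ℕ) (x : ℕ) :
    profOf (b :: (ms ++ [x])) =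
      (some b, if ms = [] then none else some (ms.foldr max 0), some x) := by
  cases ms with
  | nil => simp [profOf, List.getLast!_cons_eq_getLastD, List.getLastD]
  | cons m ms' =>
    show (some b, if 2 ≤ ((m :: ms') ++ [x]).length then
        some (((m :: ms') ++ [x]).dropLast.foldr max 0) else none,
        some (((m :: ms') ++ [x]).getLast!)) = _
    rw [List.dropLast_concat, getLast!_concat']
    simp

lemma profOf_reverse (l : List ℕ) (h : l ≠ []) :
    profOf l.reverse = prev (profOf l) := by
  cases l with
  | nil => exact absurd rfl h
  | cons b bs =>
    cases bs with
    | nil => rfl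
    | cons b2 bs' =>
      rcases (b2 :: bs').eq_nil_or_concat with h2 | ⟨ms, x, h2⟩
      · simp at h2
      · rw [List.concat_eq_append] at h2
        rw [h2]
        rw [show (b :: (ms ++ [x])).reverse = x :: (ms.reverse ++ [b]) by simp]
        rw [profOf_concat, profOf_concat]
        simp only [prev, List.reverse_eq_nil_iff, foldr_max_reverse]

lemma valid_forms (p : CP) (hp : ValidCP p) :
    (∃ a, p = (some a, none, none)) ∨ (∃ a d, p = (some a, none, some d)) ∨
      (∃ a c d, p = (some a, some c, some d)) := by
  obtain ⟨w, rfl⟩ := hp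
  rw [Profile_eq]
  cases h : blocks w with
  | nil => exact absurd h (blocks_ne_nil w)
  | cons b bs =>
    cases bs with
    | nil => exact .inl ⟨b, rfl⟩
    | cons b2 bs' =>
      by_cases h2 : bs' = []
      · subst h2
        exact .inr (.inl ⟨b, [b2].getLast!, by simp [profOf]⟩)
      · have hl : 2 ≤ (b2 :: bs').length := by
          have := List.length_pos_iff.mpr h2
          simp only [List.length_cons]; omega
        exact .inr (.inr ⟨b, (b2 :: bs').dropLast.foldr max 0,
          (b2 :: bs').getLast!, by simp [profOf, hl, h2]⟩)

/-- `prev` is an involution on valid profiles, is an anti-homomorphism for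
profile concatenation, and corresponds to reversing counter-operation
sequences. -/
theorem profile_reverse :
    (∀ p : CP, ValidCP p → prev (prev p) = p) ∧
    (∀ p q : CP, ValidCP p → ValidCP q →
      prev (pcomp p q) = pcomp (prev q) (prev p)) ∧
    (∀ w : List Op, Profile w.reverse = prev (Profile w)) := by
  refine ⟨?_, ?_, ?_⟩
  · intro p hp
    rcases valid_forms p hp with ⟨a, rfl⟩ | ⟨a, d, rfl⟩ | ⟨a, c, d, rfl⟩ <;> rfl
  · intro p q hp hq
    rcases valid_forms p hp with ⟨a, rfl⟩ | ⟨a, d, rfl⟩ | ⟨a, c, d, rfl⟩ <;>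
      rcases valid_forms q hq with ⟨a', rfl⟩ | ⟨a', d', rfl⟩ | ⟨a', c', d', rfl⟩ <;>
      simp [pcomp, prev, Option.map₂] <;> omega
  · intro w
    rw [Profile_eq, Profile_eq, blocks_reverse,
      profOf_reverse _ (blocks_ne_nil w)]
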